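/- (Claim 5, second part) Let k ≥ 2, n ≥ 2 be integers and let A' ⊆ [k]^n be a compressed set such that |B_{≥r+1}| < |A'| ≤ |B_{≥r}| for some 0 ≤ r ≤ n. Then there exists a compressed set A ⊆ [k]^n with |A| = |A'|, B_{≥r+1} ⊆ A ⊆ B_{≥r}, and |d(A')| ≥ |d(A)|. -/
import Mathlib


open Finset
open scoped Classical

/-- `R_i(x)`: the set of coordinates of `x` equal to `i`.
The ambient alphabet is `[k+1] = {0,…,k}`. -/
noncomputable def rset {k N : ℕ} (x : Fin N → Fin (k + 1)) (i : ℕ) : Finset (Fin N) :=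
  Finset.univ.filter fun j => (x j : ℕ) = i

/-- the strict binary order on finite sets of coordinates:
`X <_bin Y` iff `X ≠ Y` and `max (X Δ Y) ∈ Y`. -/
def binLT {N : ℕ} (X Y : Finset (Fin N)) : Prop :=
  ∃ m ∈ Y, m ∉ X ∧ ∀ j : Fin N, ((j ∈ X ∧ j ∉ Y) ∨ (j ∈ Y ∧ j ∉ X)) → j ≤ m

/-- the strict `≤`-order on `[k+1]^N`: `x < y` iff `|R_0(x)| > |R_0(y)|`, or
`|R_0(x)| = |R_0(y)|` and for the largest `i` with `R_i(x) ≠ R_i(y)` we have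
`max (R_i(x) Δ R_i(y)) ∈ R_i(y)`. -/
def plt {k N : ℕ} (x y : Fin N → Fin (k + 1)) : Prop :=
  (rset y 0).card < (rset x 0).card ∨
    ((rset x 0).card = (rset y 0).card ∧
      ∃ i : ℕ, binLT (rset x i) (rset y i) ∧ ∀ j : ℕ, i < j → rset x j = rset y j)

/-- the `≤`-order on `[k+1]^N`. -/
def ple {k N : ℕ} (x y : Fin N → Fin (k + 1)) : Prop := x = y ∨ plt x y

/-- `B` is an initial segment of the `≤`-order. -/
def isInitSeg {k N : ℕ} (B : Finset (Fin N → Fin (k + 1))) : Prop :=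
  ∀ y ∈ B, ∀ x, ple x y → x ∈ B

/-- the `d`-shadow: all points obtained from a point of `A` by flipping one
nonzero coordinate to `0`. -/
noncomputable def dShadow {k N : ℕ} (A : Finset (Fin N → Fin (k + 1))) :
    Finset (Fin N → Fin (k + 1)) :=
  A.biUnion fun x =>
    (Finset.univ.filter fun i => x i ≠ 0).image fun i => Function.update x i 0

/-- the initial segment of the `≤`-order on `[k+1]^N` of cardinality `m`. -/
noncomputable def initSeg (k N m : ℕ) : Finset (Fin N → Fin (k + 1)) :=
  Finset.univ.filter fun x => (Finset.univ.filter fun y => ple y x).card ≤ m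

/-- the `C_s`-compression of `A ⊆ [k+1]^(n+1)`: replace each slice
`A_{s,t} = {y : t_s y ∈ A}` by the initial segment of the same size. -/
noncomputable def compress {k n : ℕ} (s : Fin (n + 1)) (A : Finset (Fin (n + 1) → Fin (k + 1))) :
    Finset (Fin (n + 1) → Fin (k + 1)) :=
  Finset.univ.biUnion fun t : Fin (k + 1) =>
    (initSeg k n
        (Finset.univ.filter fun y : Fin n → Fin (k + 1) => s.insertNth t y ∈ A).card).image
      fun y => s.insertNth t y

/-- `A` is compressed if every `C_s`-compression fixes it. -/
def IsCompressed {k n : ℕ} (A : Finset (Fin (n + 1) → Fin (k + 1))) : Prop :=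
  ∀ s : Fin (n + 1), compress s A = A

/-- `B_r`: points with exactly `r` zero coordinates. -/
noncomputable def Bexact (k N r : ℕ) : Finset (Fin N → Fin (k + 1)) :=
  Finset.univ.filter fun x => (rset x 0).card = r

/-- `B_{≥r}`: points with at least `r` zero coordinates. -/
noncomputable def Bge (k N r : ℕ) : Finset (Fin N → Fin (k + 1)) :=
  Finset.univ.filter fun x => r ≤ (rset x 0).card

/-- `m(x)`: the largest coordinate value of `x`. -/
noncomputable def mval {k N : ℕ} (x : Fin N → Fin (k + 1)) : ℕ :=
  Finset.univ.sup fun i => (x i : ℕ)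

/-- the class `C_X`: points with maximal coordinate `s`, attained exactly on `X`,
and exactly `r` zero coordinates. -/
noncomputable def classSet (k N s r : ℕ) (X : Finset (Fin N)) : Finset (Fin N → Fin (k + 1)) :=
  Finset.univ.filter fun x => mval x = s ∧ rset x s = X ∧ (rset x 0).card = r

/-- `[m]^N = {0,…,m−1}^N`. -/
noncomputable def box (k N m : ℕ) : Finset (Fin N → Fin (k + 1)) :=
  Finset.univ.filter fun x => ∀ i, (x i : ℕ) < m

/-- `{1,…,s−1}^N`. -/
noncomputable def box1 (k N s : ℕ) : Finset (Fin N → Fin (k + 1)) :=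
  Finset.univ.filter fun x => ∀ i, 1 ≤ (x i : ℕ) ∧ (x i : ℕ) ≤ s - 1

/-- `B` is a down-set. -/
def isDownSet {k N : ℕ} (B : Finset (Fin N → Fin (k + 1))) : Prop :=
  ∀ y ∈ B, ∀ x : Fin N → Fin (k + 1), (∀ j, (x j : ℕ) ≤ (y j : ℕ)) → x ∈ B


/-! ### Auxiliary development -/

def bin {N : ℕ} (X : Finset (Fin N)) : ℕ := ∑ j ∈ X, 2 ^ (j : ℕ)

lemma sum_range_two_pow (M : ℕ) : ∑ i ∈ Finset.range M, 2 ^ i = 2 ^ M - 1 := by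
  induction M with
  | zero => simp
  | succ M ih => rw [Finset.sum_range_succ, ih]; have : 1 ≤ 2 ^ M := Nat.one_le_two_pow; omega

lemma bin_lt_pow {N : ℕ} {X : Finset (Fin N)} {M : ℕ} (h : ∀ j ∈ X, (j : ℕ) < M) :
    bin X < 2 ^ M := by
  have h1 : bin X = ∑ i ∈ X.image (fun j : Fin N => (j : ℕ)), 2 ^ i := by
    rw [Finset.sum_image (fun a _ b _ hab => Fin.val_injective hab)]
    rfl
  have h2 : X.image (fun j : Fin N => (j : ℕ)) ⊆ Finset.range M := by
    intro i hi
    simp only [Finset.mem_image] at hi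
    obtain ⟨j, hj, rfl⟩ := hi
    exact Finset.mem_range.mpr (h j hj)
  have h3 : ∑ i ∈ X.image (fun j : Fin N => (j : ℕ)), 2 ^ i ≤ ∑ i ∈ Finset.range M, 2 ^ i :=
    Finset.sum_le_sum_of_subset h2
  have h4 := sum_range_two_pow M
  have : 1 ≤ 2 ^ M := Nat.one_le_two_pow
  omega

lemma bin_lt_bin {N : ℕ} {X Y : Finset (Fin N)} {m : Fin N} (hmY : m ∈ Y) (hmX : m ∉ X)
    (hdom : ∀ j : Fin N, ((j ∈ X ∧ j ∉ Y) ∨ (j ∈ Y ∧ j ∉ X)) → j ≤ m) :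
    bin X < bin Y := by
  have hd1 : Disjoint (X ∩ Y) (X \ Y) := by
    simp [Finset.disjoint_left]; tauto
  have hXsplit : bin X = bin (X ∩ Y) + bin (X \ Y) := by
    have he : X ∩ Y ∪ X \ Y = X := by
      ext a; simp only [Finset.mem_union, Finset.mem_inter, Finset.mem_sdiff]; tauto
    rw [bin, bin, bin, ← Finset.sum_union hd1, he]
  have hbs : bin (X \ Y) < 2 ^ (m : ℕ) := by
    apply bin_lt_pow
    intro j hj
    rw [Finset.mem_sdiff] at hj
    have hle : j ≤ m := hdom j (Or.inl hj)
    have hne : j ≠ m := by rintro rfl; exact hj.2 hmY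
    exact lt_of_le_of_ne hle (by simpa [Fin.ext_iff] using hne)
  have hYsub : insert m (X ∩ Y) ⊆ Y := by
    intro a ha
    rcases Finset.mem_insert.mp ha with rfl | ha
    · exact hmY
    · exact (Finset.mem_inter.mp ha).2
  have hYge : 2 ^ (m : ℕ) + bin (X ∩ Y) ≤ bin Y := by
    have : bin (insert m (X ∩ Y)) ≤ bin Y := Finset.sum_le_sum_of_subset hYsub
    rwa [bin, Finset.sum_insert (by simp [hmX])] at this
  omega

lemma binLT_or {N : ℕ} {X Y : Finset (Fin N)} (h : X ≠ Y) : binLT X Y ∨ binLT Y X := by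
  set D := (X \ Y) ∪ (Y \ X) with hD
  have hDne : D.Nonempty := by
    rw [Finset.nonempty_iff_ne_empty]
    intro he
    apply h
    apply Finset.Subset.antisymm <;> intro a ha <;> by_contra hb
    · have : a ∈ D := by simp [hD, ha, hb]
      simp [he] at this
    · have : a ∈ D := by simp [hD, ha, hb]
      simp [he] at this
  set m := D.max' hDne with hm
  have hmD : m ∈ D := D.max'_mem hDne
  have hdom : ∀ j : Fin N, ((j ∈ X ∧ j ∉ Y) ∨ (j ∈ Y ∧ j ∉ X)) → j ≤ m := by
    intro j hj
    apply Finset.le_max'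
    simp only [hD, Finset.mem_union, Finset.mem_sdiff]; tauto
  have hdom' : ∀ j : Fin N, ((j ∈ Y ∧ j ∉ X) ∨ (j ∈ X ∧ j ∉ Y)) → j ≤ m := fun j hj => hdom j hj.symm
  rcases Finset.mem_union.mp hmD with hm1 | hm1
  · rw [Finset.mem_sdiff] at hm1
    exact Or.inr ⟨m, hm1.1, hm1.2, hdom'⟩
  · rw [Finset.mem_sdiff] at hm1
    exact Or.inl ⟨m, hm1.1, hm1.2, hdom⟩

lemma binLT_iff {N : ℕ} {X Y : Finset (Fin N)} : binLT X Y ↔ bin X < bin Y := by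
  constructor
  · rintro ⟨m, hmY, hmX, hdom⟩
    exact bin_lt_bin hmY hmX hdom
  · intro h
    have hne : X ≠ Y := by rintro rfl; exact lt_irrefl _ h
    rcases binLT_or hne with h1 | h1
    · exact h1
    · obtain ⟨m, hmY, hmX, hdom⟩ := h1
      exact absurd (bin_lt_bin hmY hmX hdom) (by omega)

lemma bin_ne {N : ℕ} {X Y : Finset (Fin N)} (h : X ≠ Y) : bin X ≠ bin Y := by
  rcases binLT_or h with h1 | h1 <;> have := binLT_iff.mp h1 <;> omega

-- rset facts
lemma mem_rset {k N : ℕ} {x : Fin N → Fin (k + 1)} {i : ℕ} {j : Fin N} :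
    j ∈ rset x i ↔ (x j : ℕ) = i := by simp [rset]

lemma rset_empty_of_gt {k N : ℕ} {x : Fin N → Fin (k + 1)} {i : ℕ} (h : k < i) :
    rset x i = ∅ := by
  ext j
  simp only [mem_rset, Finset.notMem_empty, iff_false]
  have := (x j).isLt
  omega

lemma zeros_le {k N : ℕ} (x : Fin N → Fin (k + 1)) : (rset x 0).card ≤ N := by
  simpa using Finset.card_le_card (Finset.subset_univ (rset x 0))

lemma bin_rset_lt {k N : ℕ} (x : Fin N → Fin (k + 1)) (i : ℕ) : bin (rset x i) < 2 ^ N :=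
  bin_lt_pow (fun j _ => j.isLt)

-- equality of all rsets implies equality
lemma eq_of_rset_eq {k N : ℕ} {x y : Fin N → Fin (k + 1)}
    (h : ∀ j : ℕ, j < k + 1 → rset x j = rset y j) : x = y := by
  funext p
  have h1 : p ∈ rset x ((x p : ℕ)) := mem_rset.mpr rfl
  rw [h _ (x p).isLt] at h1
  exact Fin.val_injective (mem_rset.mp h1).symm

-- digit lemmas
lemma digit_sum_lt {B K : ℕ} (hB : 1 ≤ B) (d : ℕ → ℕ) (hd : ∀ j < K, d j < B) :
    ∑ j ∈ Finset.range K, d j * B ^ j < B ^ K := by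
  induction K with
  | zero => simpa using hB
  | succ K ih =>
    rw [Finset.sum_range_succ]
    have h1 : ∑ j ∈ Finset.range K, d j * B ^ j < B ^ K := ih (fun j hj => hd j (by omega))
    have h2 : d K < B := hd K (by omega)
    have h3 : d K * B ^ K + B ^ K ≤ B * B ^ K := by
      have h4 : (d K + 1) * B ^ K ≤ B * B ^ K := Nat.mul_le_mul_right _ (by omega)
      rwa [add_mul, one_mul] at h4
    have : B * B ^ K = B ^ (K + 1) := (pow_succ B K).symm ▸ (mul_comm B (B ^ K) ▸ rfl)
    omega

lemma digit_sum_lt_digit_sum {B K i : ℕ} (hB : 1 ≤ B) (f g : ℕ → ℕ)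
    (hf : ∀ j < K, f j < B) (hiK : i < K) (hfg : f i < g i)
    (heq : ∀ j, i < j → j < K → f j = g j) :
    ∑ j ∈ Finset.range K, f j * B ^ j < ∑ j ∈ Finset.range K, g j * B ^ j := by
  have hsplit : ∀ h : ℕ → ℕ, ∑ j ∈ Finset.range K, h j * B ^ j =
      ∑ j ∈ Finset.range (i+1), h j * B ^ j + ∑ j ∈ Finset.Ico (i+1) K, h j * B ^ j := by
    intro h
    simp only [Finset.range_eq_Ico]
    rw [← Finset.sum_Ico_consecutive _ (Nat.zero_le (i+1)) (by omega : i + 1 ≤ K)]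
  rw [hsplit f, hsplit g]
  have htail : ∑ j ∈ Finset.Ico (i+1) K, f j * B ^ j = ∑ j ∈ Finset.Ico (i+1) K, g j * B ^ j := by
    apply Finset.sum_congr rfl
    intro j hj
    rw [Finset.mem_Ico] at hj
    rw [heq j hj.1 hj.2]
  have hhead : ∑ j ∈ Finset.range (i+1), f j * B ^ j < ∑ j ∈ Finset.range (i+1), g j * B ^ j := by
    rw [Finset.sum_range_succ, Finset.sum_range_succ]
    have h1 : ∑ j ∈ Finset.range i, f j * B ^ j < B ^ i :=
      digit_sum_lt hB f (fun j hj => hf j (by omega))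
    have h2 : f i * B ^ i + B ^ i ≤ g i * B ^ i := by
      have h4 : (f i + 1) * B ^ i ≤ g i * B ^ i := Nat.mul_le_mul_right _ (by omega)
      rwa [add_mul, one_mul] at h4
    have h3 : 0 ≤ ∑ j ∈ Finset.range i, g j * B ^ j := Nat.zero_le _
    omega
  omega

-- the rank function
noncomputable def Gv {k N : ℕ} (x : Fin N → Fin (k + 1)) : ℕ :=
  (N - (rset x 0).card) * (2 ^ N) ^ (k + 1) +
    ∑ j ∈ Finset.range (k + 1), bin (rset x j) * (2 ^ N) ^ j

lemma Fval_lt {k N : ℕ} (x : Fin N → Fin (k + 1)) :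
    ∑ j ∈ Finset.range (k + 1), bin (rset x j) * (2 ^ N) ^ j < (2 ^ N) ^ (k + 1) :=
  digit_sum_lt Nat.one_le_two_pow _ (fun j _ => bin_rset_lt x j)

lemma Gv_lt_of_zeros {k N : ℕ} {x y : Fin N → Fin (k + 1)}
    (h : (rset y 0).card < (rset x 0).card) : Gv x < Gv y := by
  have hx := zeros_le x
  have hy := zeros_le y
  have h1 : N - (rset x 0).card + 1 ≤ N - (rset y 0).card := by omega
  have h2 := Fval_lt x
  have h3 : (N - (rset x 0).card) * (2 ^ N) ^ (k + 1) + (2 ^ N) ^ (k + 1) ≤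
      (N - (rset y 0).card) * (2 ^ N) ^ (k + 1) := by
    have h4 : (N - (rset x 0).card + 1) * (2 ^ N) ^ (k + 1) ≤
        (N - (rset y 0).card) * (2 ^ N) ^ (k + 1) := Nat.mul_le_mul_right _ h1
    rwa [add_mul, one_mul] at h4
  have h4 : 0 ≤ ∑ j ∈ Finset.range (k + 1), bin (rset y j) * (2 ^ N) ^ j := Nat.zero_le _
  unfold Gv
  omega

lemma plt_G {k N : ℕ} {x y : Fin N → Fin (k + 1)} (h : plt x y) : Gv x < Gv y := by
  rcases h with h | ⟨hz, i, hbin, hgt⟩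
  · exact Gv_lt_of_zeros h
  · have hik : i < k + 1 := by
      by_contra hik
      obtain ⟨m, hm, -⟩ := hbin
      rw [rset_empty_of_gt (by omega)] at hm
      exact absurd hm (Finset.notMem_empty m)
    have hF : ∑ j ∈ Finset.range (k + 1), bin (rset x j) * (2 ^ N) ^ j <
        ∑ j ∈ Finset.range (k + 1), bin (rset y j) * (2 ^ N) ^ j := by
      apply digit_sum_lt_digit_sum Nat.one_le_two_pow _ _ (fun j _ => bin_rset_lt x j) hik
      · exact binLT_iff.mp hbin
      · intro j hj _; rw [hgt j hj]
    unfold Gv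
    rw [hz]
    omega

lemma plt_total {k N : ℕ} (x y : Fin N → Fin (k + 1)) : x = y ∨ plt x y ∨ plt y x := by
  rcases lt_trichotomy ((rset x 0).card) ((rset y 0).card) with h | h | h
  · exact Or.inr (Or.inr (Or.inl h))
  · set D := (Finset.range (k + 1)).filter (fun j => rset x j ≠ rset y j) with hD
    by_cases hDe : D = ∅
    · left
      apply eq_of_rset_eq
      intro j hj
      by_contra hne
      have : j ∈ D := by simp [hD, Finset.mem_filter, Finset.mem_range, hj, hne]
      simp [hDe] at this
    · have hDne : D.Nonempty := Finset.nonempty_iff_ne_empty.mpr hDe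
      set i := D.max' hDne with hi
      have hiD : i ∈ D := D.max'_mem hDne
      rw [hD, Finset.mem_filter, Finset.mem_range] at hiD
      have hgt : ∀ j : ℕ, i < j → rset x j = rset y j := by
        intro j hj
        by_cases hjk : j < k + 1
        · by_contra hne
          have : j ∈ D := by simp [hD, Finset.mem_filter, Finset.mem_range, hjk, hne]
          have := Finset.le_max' D j this
          omega
        · rw [rset_empty_of_gt (by omega), rset_empty_of_gt (by omega)]
      rcases binLT_or hiD.2 with hb | hb
      · exact Or.inr (Or.inl (Or.inr ⟨h, i, hb, hgt⟩))
      · exact Or.inr (Or.inr (Or.inr ⟨h.symm, i, hb, fun j hj => (hgt j hj).symm⟩))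
  · exact Or.inr (Or.inl (Or.inl h))

lemma plt_iff {k N : ℕ} {x y : Fin N → Fin (k + 1)} : plt x y ↔ Gv x < Gv y := by
  constructor
  · exact plt_G
  · intro h
    rcases plt_total x y with rfl | h1 | h1
    · exact absurd h (lt_irrefl _)
    · exact h1
    · exact absurd (plt_G h1) (by omega)

lemma Gv_inj {k N : ℕ} {x y : Fin N → Fin (k + 1)} (h : Gv x = Gv y) : x = y := by
  rcases plt_total x y with rfl | h1 | h1
  · rfl
  · exact absurd (plt_G h1) (by omega)
  · exact absurd (plt_G h1) (by omega)

-- derived order facts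
lemma ple_iff {k N : ℕ} {x y : Fin N → Fin (k + 1)} : ple x y ↔ Gv x ≤ Gv y := by
  constructor
  · rintro (rfl | h)
    · exact le_refl _
    · exact le_of_lt (plt_iff.mp h)
  · intro h
    rcases lt_or_eq_of_le h with h | h
    · exact Or.inr (plt_iff.mpr h)
    · exact Or.inl (Gv_inj h)

lemma ple_refl {k N : ℕ} (x : Fin N → Fin (k + 1)) : ple x x := Or.inl rfl

lemma ple_trans {k N : ℕ} {x y z : Fin N → Fin (k + 1)} (h1 : ple x y) (h2 : ple y z) :
    ple x z := ple_iff.mpr (le_trans (ple_iff.mp h1) (ple_iff.mp h2))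

lemma ple_total {k N : ℕ} (x y : Fin N → Fin (k + 1)) : ple x y ∨ ple y x := by
  rcases le_total (Gv x) (Gv y) with h | h
  · exact Or.inl (ple_iff.mpr h)
  · exact Or.inr (ple_iff.mpr h)

lemma zeros_antitone {k N : ℕ} {x y : Fin N → Fin (k + 1)} (h : ple x y) :
    (rset y 0).card ≤ (rset x 0).card := by
  by_contra hc
  have := Gv_lt_of_zeros (show (rset x 0).card < (rset y 0).card by omega)
  have := ple_iff.mp h
  omega

-- insertNth and rset
lemma rset_insertNth {k n : ℕ} (s : Fin (n + 1)) (t : Fin (k + 1)) (y : Fin n → Fin (k + 1))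
    (i : ℕ) :
    rset (s.insertNth t y) i =
      (rset y i).map (Fin.succAboveEmb s) ∪ (if (t : ℕ) = i then {s} else ∅) := by
  ext j
  by_cases hj : j = s
  · subst hj
    have h1 : j ∉ (rset y i).map (Fin.succAboveEmb j) := by
      simp only [Finset.mem_map, Fin.succAboveEmb_apply]
      rintro ⟨a, -, ha⟩
      exact Fin.succAbove_ne j a ha
    by_cases ht : (t : ℕ) = i <;>
      simp [mem_rset, Fin.insertNth_apply_same, ht, h1]
  · obtain ⟨a, rfl⟩ := Fin.exists_succAbove_eq hj
    have h1 : s.succAbove a ∈ (rset y i).map (Fin.succAboveEmb s) ↔ (y a : ℕ) = i := by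
      simp only [Finset.mem_map, Fin.succAboveEmb_apply]
      constructor
      · rintro ⟨b, hb, hba⟩
        rw [Fin.succAbove_right_injective hba] at hb
        exact mem_rset.mp hb
      · intro h
        exact ⟨a, mem_rset.mpr h, rfl⟩
    have h2 : s.succAbove a ∉ (if (t : ℕ) = i then ({s} : Finset (Fin (n+1))) else ∅) := by
      by_cases ht : (t : ℕ) = i <;> simp [ht, Fin.succAbove_ne]
    simp only [mem_rset, Fin.insertNth_apply_succAbove, Finset.mem_union, h1]
    constructor
    · exact Or.inl
    · rintro (h | h)
      · exact h
      · exact absurd h h2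

lemma zeros_insertNth {k n : ℕ} (s : Fin (n + 1)) (t : Fin (k + 1)) (y : Fin n → Fin (k + 1)) :
    (rset (s.insertNth t y) 0).card = (rset y 0).card + (if (t : ℕ) = 0 then 1 else 0) := by
  rw [rset_insertNth]
  have hdisj : Disjoint ((rset y 0).map (Fin.succAboveEmb s))
      (if (t : ℕ) = 0 then ({s} : Finset (Fin (n+1))) else ∅) := by
    by_cases ht : (t : ℕ) = 0 <;> simp only [ht, if_true, if_false, Finset.disjoint_empty_right]
    rw [Finset.disjoint_right]
    intro b hb
    rw [Finset.mem_singleton] at hb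
    subst hb
    simp only [Finset.mem_map, Fin.succAboveEmb_apply]
    rintro ⟨a, -, ha⟩
    exact Fin.succAbove_ne b a ha
  rw [Finset.card_union_of_disjoint hdisj, Finset.card_map]
  by_cases ht : (t : ℕ) = 0 <;> simp [ht]


lemma succAbove_le_iff {n : ℕ} (s : Fin (n + 1)) {a b : Fin n} :
    s.succAbove a ≤ s.succAbove b ↔ a ≤ b :=
  (Fin.strictMono_succAbove s).le_iff_le

lemma rset_eq_transfer {k n : ℕ} {s : Fin (n + 1)} {t : Fin (k + 1)}
    {a b : Fin n → Fin (k + 1)} {i : ℕ} :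
    rset (s.insertNth t a) i = rset (s.insertNth t b) i ↔ rset a i = rset b i := by
  rw [rset_insertNth, rset_insertNth]
  constructor
  · intro h
    ext c
    have hc : s.succAbove c ∉ (if (t : ℕ) = i then ({s} : Finset (Fin (n+1))) else ∅) := by
      by_cases ht : (t : ℕ) = i <;> simp [ht, Fin.succAbove_ne]
    have hmem : ∀ X : Finset (Fin n),
        s.succAbove c ∈ X.map (Fin.succAboveEmb s) ∪ (if (t : ℕ) = i then {s} else ∅) ↔ c ∈ X := by
      intro X
      simp only [Finset.mem_union, Finset.mem_map, Fin.succAboveEmb_apply]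
      constructor
      · rintro (⟨d, hd, hdc⟩ | hE)
        · rwa [Fin.succAbove_right_injective hdc] at hd
        · exact absurd hE hc
      · intro hcX
        exact Or.inl ⟨c, hcX, rfl⟩
    rw [← hmem (rset a i), h, hmem]
  · intro h; rw [h]

lemma binLT_transfer {k n : ℕ} {s : Fin (n + 1)} {t : Fin (k + 1)}
    {a b : Fin n → Fin (k + 1)} {i : ℕ} :
    binLT (rset (s.insertNth t a) i) (rset (s.insertNth t b) i) ↔ binLT (rset a i) (rset b i) := by
  rw [rset_insertNth, rset_insertNth]
  set X := rset a i
  set Y := rset b i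
  set E := (if (t : ℕ) = i then ({s} : Finset (Fin (n+1))) else ∅) with hE
  have hEs : ∀ c : Fin n, s.succAbove c ∉ E := by
    intro c
    by_cases ht : (t : ℕ) = i <;> simp [hE, ht, Fin.succAbove_ne]
  have hmem : ∀ (Z : Finset (Fin n)) (w : Fin (n+1)),
      w ∈ Z.map (Fin.succAboveEmb s) ∪ E ↔ (w ∈ E ∨ ∃ c ∈ Z, s.succAbove c = w) := by
    intro Z w
    simp only [Finset.mem_union, Finset.mem_map, Fin.succAboveEmb_apply]
    rw [or_comm]
  constructor
  · rintro ⟨m', hm'Y, hm'X, hdom⟩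
    rw [hmem] at hm'Y
    rcases hm'Y with hm'E | ⟨m, hmY, rfl⟩
    · exact absurd (Finset.mem_union_right _ hm'E) hm'X
    · have hmX : m ∉ X := by
        intro hmX
        exact hm'X (Finset.mem_union_left _ (Finset.mem_map.mpr ⟨m, hmX, rfl⟩))
      refine ⟨m, hmY, hmX, ?_⟩
      intro j hj
      have := hdom (s.succAbove j) ?_
      · exact (succAbove_le_iff s).mp this
      · rcases hj with ⟨hj1, hj2⟩ | ⟨hj1, hj2⟩
        · refine Or.inl ⟨Finset.mem_union_left _ (Finset.mem_map.mpr ⟨j, hj1, rfl⟩), ?_⟩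
          rw [hmem]
          push_neg
          refine ⟨hEs j, ?_⟩
          rintro c hc hcj
          rw [Fin.succAbove_right_injective hcj] at hc
          exact hj2 hc
        · refine Or.inr ⟨Finset.mem_union_left _ (Finset.mem_map.mpr ⟨j, hj1, rfl⟩), ?_⟩
          rw [hmem]
          push_neg
          refine ⟨hEs j, ?_⟩
          rintro c hc hcj
          rw [Fin.succAbove_right_injective hcj] at hc
          exact hj2 hc
  · rintro ⟨m, hmY, hmX, hdom⟩
    refine ⟨s.succAbove m, Finset.mem_union_left _ (Finset.mem_map.mpr ⟨m, hmY, rfl⟩), ?_, ?_⟩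
    · rw [hmem]
      push_neg
      refine ⟨hEs m, ?_⟩
      rintro c hc hcm
      rw [Fin.succAbove_right_injective hcm] at hc
      exact hmX hc
    · intro w hw
      have hwE : w ∉ E := by
        rcases hw with ⟨h1, h2⟩ | ⟨h1, h2⟩ <;>
        · intro hwE
          exact h2 (Finset.mem_union_right _ hwE)
      have : ∃ c, (c ∈ X ∧ c ∉ Y ∨ c ∈ Y ∧ c ∉ X) ∧ s.succAbove c = w := by
        rcases hw with ⟨h1, h2⟩ | ⟨h1, h2⟩
        · rw [hmem] at h1
          rcases h1 with h1 | ⟨c, hc, rfl⟩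
          · exact absurd h1 hwE
          · refine ⟨c, Or.inl ⟨hc, ?_⟩, rfl⟩
            intro hcY
            exact h2 (Finset.mem_union_left _ (Finset.mem_map.mpr ⟨c, hcY, rfl⟩))
        · rw [hmem] at h1
          rcases h1 with h1 | ⟨c, hc, rfl⟩
          · exact absurd h1 hwE
          · refine ⟨c, Or.inr ⟨hc, ?_⟩, rfl⟩
            intro hcX
            exact h2 (Finset.mem_union_left _ (Finset.mem_map.mpr ⟨c, hcX, rfl⟩))
      obtain ⟨c, hc, rfl⟩ := this
      exact (succAbove_le_iff s).mpr (hdom c hc)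

lemma plt_insertNth {k n : ℕ} {s : Fin (n + 1)} {t : Fin (k + 1)}
    {a b : Fin n → Fin (k + 1)} :
    plt (s.insertNth t a) (s.insertNth t b) ↔ plt a b := by
  unfold plt
  rw [zeros_insertNth, zeros_insertNth]
  constructor
  · rintro (h | ⟨hz, i, hbin, hgt⟩)
    · exact Or.inl (by omega)
    · refine Or.inr ⟨by omega, i, binLT_transfer.mp hbin, ?_⟩
      intro j hj
      exact rset_eq_transfer.mp (hgt j hj)
  · rintro (h | ⟨hz, i, hbin, hgt⟩)
    · exact Or.inl (by omega)
    · refine Or.inr ⟨by omega, i, binLT_transfer.mpr hbin, ?_⟩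
      intro j hj
      exact rset_eq_transfer.mpr (hgt j hj)

lemma ple_insertNth {k n : ℕ} {s : Fin (n + 1)} {t : Fin (k + 1)}
    {a b : Fin n → Fin (k + 1)} :
    ple (s.insertNth t a) (s.insertNth t b) ↔ ple a b := by
  unfold ple
  rw [plt_insertNth]
  constructor
  · rintro (h | h)
    · left
      have := congrArg (s.removeNth) h
      rwa [Fin.removeNth_insertNth, Fin.removeNth_insertNth] at this
    · exact Or.inr h
  · rintro (rfl | h)
    · exact Or.inl rfl
    · exact Or.inr h

example : True := trivial

-- slices
noncomputable def slc {k n : ℕ} (s : Fin (n + 1)) (t : Fin (k + 1))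
    (A : Finset (Fin (n + 1) → Fin (k + 1))) : Finset (Fin n → Fin (k + 1)) :=
  Finset.univ.filter fun y => s.insertNth t y ∈ A

lemma mem_slc {k n : ℕ} {s : Fin (n + 1)} {t : Fin (k + 1)}
    {A : Finset (Fin (n + 1) → Fin (k + 1))} {y : Fin n → Fin (k + 1)} :
    y ∈ slc s t A ↔ s.insertNth t y ∈ A := by simp [slc]

lemma mem_initSeg {k N m : ℕ} {x : Fin N → Fin (k + 1)} :
    x ∈ initSeg k N m ↔ (Finset.univ.filter fun y => ple y x).card ≤ m := by simp [initSeg]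

lemma initSeg_isInitSeg (k N m : ℕ) : isInitSeg (initSeg k N m) := by
  intro y hy x hxy
  rw [mem_initSeg] at hy ⊢
  refine le_trans (Finset.card_le_card ?_) hy
  intro z hz
  simp only [Finset.mem_filter, Finset.mem_univ, true_and] at hz ⊢
  exact ple_trans hz hxy

lemma isInitSeg_eq_initSeg {k N : ℕ} {D : Finset (Fin N → Fin (k + 1))}
    (hD : isInitSeg D) : D = initSeg k N D.card := by
  apply Finset.Subset.antisymm
  · intro x hx
    rw [mem_initSeg]
    apply Finset.card_le_card
    intro z hz
    simp only [Finset.mem_filter, Finset.mem_univ, true_and] at hz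
    exact hD x hx z hz
  · intro x hx
    by_contra hxD
    rw [mem_initSeg] at hx
    have hsub : D ⊆ (Finset.univ.filter fun y => ple y x).erase x := by
      intro y hy
      rw [Finset.mem_erase]
      constructor
      · rintro rfl; exact hxD hy
      · simp only [Finset.mem_filter, Finset.mem_univ, true_and]
        rcases ple_total y x with h | h
        · exact h
        · exact absurd (hD y hy x h) hxD
    have h1 : x ∈ (Finset.univ.filter fun y => ple y x) := by
      simp [ple_refl]
    have h2 := Finset.card_le_card hsub
    rw [Finset.card_erase_of_mem h1] at h2
    have h3 : 0 < (Finset.univ.filter fun y => ple y x).card := Finset.card_pos.mpr ⟨x, h1⟩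
    omega

lemma mem_compress {k n : ℕ} {s : Fin (n + 1)} {A : Finset (Fin (n + 1) → Fin (k + 1))}
    {x : Fin (n + 1) → Fin (k + 1)} :
    x ∈ compress s A ↔ s.removeNth x ∈ initSeg k n (slc s (x s) A).card := by
  unfold compress
  rw [Finset.mem_biUnion]
  constructor
  · rintro ⟨t, -, hx⟩
    rw [Finset.mem_image] at hx
    obtain ⟨y, hy, rfl⟩ := hx
    rw [Fin.insertNth_apply_same, Fin.removeNth_insertNth]
    exact hy
  · intro h
    refine ⟨x s, Finset.mem_univ _, ?_⟩
    rw [Finset.mem_image]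
    exact ⟨s.removeNth x, h, Fin.insertNth_self_removeNth s x⟩

lemma compressed_iff {k n : ℕ} {A : Finset (Fin (n + 1) → Fin (k + 1))} :
    IsCompressed A ↔ ∀ (s : Fin (n + 1)) (t : Fin (k + 1)), isInitSeg (slc s t A) := by
  constructor
  · intro h s t
    have hsl : slc s t A = initSeg k n (slc s t A).card := by
      conv_lhs => rw [← h s]
      ext y
      rw [mem_slc, mem_compress, Fin.insertNth_apply_same, Fin.removeNth_insertNth]
    rw [hsl]
    exact initSeg_isInitSeg _ _ _
  · intro h s
    ext x
    rw [mem_compress, ← isInitSeg_eq_initSeg (h s (x s)), mem_slc,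
      Fin.insertNth_self_removeNth]

-- basic membership lemmas
lemma mem_Bge {k N r : ℕ} {x : Fin N → Fin (k + 1)} :
    x ∈ Bge k N r ↔ r ≤ (rset x 0).card := by simp [Bge]

lemma mem_Bexact {k N r : ℕ} {x : Fin N → Fin (k + 1)} :
    x ∈ Bexact k N r ↔ (rset x 0).card = r := by simp [Bexact]

lemma mem_dShadow {k N : ℕ} {A : Finset (Fin N → Fin (k + 1))} {z : Fin N → Fin (k + 1)} :
    z ∈ dShadow A ↔ ∃ x ∈ A, ∃ i, x i ≠ 0 ∧ z = Function.update x i 0 := by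
  simp only [dShadow, Finset.mem_biUnion, Finset.mem_image, Finset.mem_filter,
    Finset.mem_univ, true_and]
  constructor
  · rintro ⟨x, hx, i, hi, rfl⟩
    exact ⟨x, hx, i, hi, rfl⟩
  · rintro ⟨x, hx, i, hi, rfl⟩
    exact ⟨x, hx, i, hi, rfl⟩

lemma dShadow_mono {k N : ℕ} {A B : Finset (Fin N → Fin (k + 1))} (h : A ⊆ B) :
    dShadow A ⊆ dShadow B := by
  intro z hz
  rw [mem_dShadow] at hz ⊢
  obtain ⟨x, hx, i, hi, rfl⟩ := hz
  exact ⟨x, h hx, i, hi, rfl⟩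

lemma fin_val_ne_zero {k : ℕ} {v : Fin (k + 1)} : v ≠ 0 ↔ (v : ℕ) ≠ 0 := by
  constructor
  · intro h h2
    exact h (Fin.ext (by simpa using h2))
  · intro h h2
    exact h (by simp [h2])

-- zeros of an update to 0
lemma zeros_update_zero {k N : ℕ} {x : Fin N → Fin (k + 1)} {i : Fin N} (h : x i ≠ 0) :
    (rset (Function.update x i 0) 0).card = (rset x 0).card + 1 := by
  have he : rset (Function.update x i 0) 0 = insert i (rset x 0) := by
    ext j
    by_cases hj : j = i
    · subst hj
      simp [mem_rset, Function.update_self]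
    · simp [mem_rset, Function.update_of_ne hj, hj]
  rw [he, Finset.card_insert_of_notMem (by
    rw [mem_rset]
    exact fin_val_ne_zero.mp h)]

-- zeros of an update from 0 to nonzero
lemma zeros_update_of_zero {k N : ℕ} {y : Fin N → Fin (k + 1)} {p : Fin N} {v : Fin (k + 1)}
    (hy : (y p : ℕ) = 0) (hv : v ≠ 0) :
    (rset (Function.update y p v) 0).card + 1 = (rset y 0).card := by
  have he : rset (Function.update y p v) 0 = (rset y 0).erase p := by
    ext j
    by_cases hj : j = p
    · subst hj
      simp [mem_rset, Function.update_self, fin_val_ne_zero.mp hv]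
    · simp [mem_rset, Function.update_of_ne hj, hj]
  have hp : p ∈ rset y 0 := mem_rset.mpr hy
  rw [he, Finset.card_erase_of_mem hp]
  have : 0 < (rset y 0).card := Finset.card_pos.mpr ⟨p, hp⟩
  omega

-- zeros and removeNth
lemma zeros_removeNth {k n : ℕ} (s : Fin (n + 1)) (x : Fin (n + 1) → Fin (k + 1)) :
    (rset x 0).card = (rset (s.removeNth x) 0).card + (if (x s : ℕ) = 0 then 1 else 0) := by
  conv_lhs => rw [← Fin.insertNth_self_removeNth s x]
  exact zeros_insertNth s (x s) (s.removeNth x)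

-- key closure fact for compressed sets
lemma mem_of_compressed {k n : ℕ} {A : Finset (Fin (n + 1) → Fin (k + 1))}
    (hA : IsCompressed A) {x y : Fin (n + 1) → Fin (k + 1)} (hx : x ∈ A) (s : Fin (n + 1))
    (hs : y s = x s) (hG : ple (s.removeNth y) (s.removeNth x)) : y ∈ A := by
  have hsl := compressed_iff.mp hA s (x s)
  have hxs : s.removeNth x ∈ slc s (x s) A := by
    rw [mem_slc, Fin.insertNth_self_removeNth]
    exact hx
  have hys : s.removeNth y ∈ slc s (x s) A := hsl _ hxs _ hG
  rw [mem_slc] at hys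
  rw [← hs] at hys
  rwa [Fin.insertNth_self_removeNth] at hys

-- Claim A
lemma claimA {k n : ℕ} {A : Finset (Fin (n + 1) → Fin (k + 1))} (hA : IsCompressed A)
    {x₀ : Fin (n + 1) → Fin (k + 1)} (hx₀ : x₀ ∈ A) {y : Fin (n + 1) → Fin (k + 1)}
    (hy : (rset x₀ 0).card + 2 ≤ (rset y 0).card) : y ∈ dShadow A := by
  have hns : ¬ rset y 0 ⊆ rset x₀ 0 := by
    intro h
    have := Finset.card_le_card h
    omega
  obtain ⟨p, hp, hp'⟩ := Finset.not_subset.mp hns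
  have hyp : (y p : ℕ) = 0 := mem_rset.mp hp
  have hxp : (x₀ p : ℕ) ≠ 0 := fun h => hp' (mem_rset.mpr h)
  set w := Function.update y p (x₀ p) with hw
  have hwp : w p = x₀ p := Function.update_self p (x₀ p) y
  have hwz : (rset w 0).card + 1 = (rset y 0).card :=
    zeros_update_of_zero hyp (fin_val_ne_zero.mpr hxp)
  have hwA : w ∈ A := by
    apply mem_of_compressed hA hx₀ p hwp
    apply Or.inr
    apply Or.inl
    have h1 := zeros_removeNth p w
    have h2 := zeros_removeNth p x₀
    rw [hwp] at h1
    simp only [if_neg hxp] at h1 h2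
    omega
  rw [mem_dShadow]
  have hwp0 : w p ≠ 0 := by rw [hwp]; exact fin_val_ne_zero.mpr hxp
  refine ⟨w, hwA, p, hwp0, ?_⟩
  funext j
  by_cases hj : j = p
  · rw [hj, Function.update_self]
    have h5 : (y p : ℕ) = ((0 : Fin (k + 1)) : ℕ) := by simpa using hyp
    exact Fin.ext h5
  · rw [Function.update_of_ne hj, hw, Function.update_of_ne hj]

-- ===== construction =====

noncomputable def lvlP (k N r c : ℕ) : Finset (Fin N → Fin (k + 1)) :=
  (Bexact k N r).filter fun x => ((Bexact k N r).filter fun y => ple y x).card ≤ c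

def goodS (k n r : ℕ) (S : Finset (Fin (n + 1) → Fin (k + 1))) : Prop :=
  S ⊆ Bexact k (n + 1) r ∧
    ∀ (s : Fin (n + 1)) (t : Fin (k + 1)) (a b : Fin n → Fin (k + 1)),
      s.insertNth t b ∈ S → s.insertNth t a ∈ Bexact k (n + 1) r → ple a b →
        s.insertNth t a ∈ S

lemma goodS_level (k n r : ℕ) : goodS k n r (Bexact k (n + 1) r) :=
  ⟨Finset.Subset.refl _, fun _ _ _ _ _ ha _ => ha⟩

lemma goodS_inter {k n r : ℕ} {S₁ S₂ : Finset (Fin (n + 1) → Fin (k + 1))}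
    (h1 : goodS k n r S₁) (h2 : goodS k n r S₂) : goodS k n r (S₁ ∩ S₂) := by
  refine ⟨fun x hx => h1.1 (Finset.mem_inter.mp hx).1, ?_⟩
  intro s t a b hb ha hab
  rw [Finset.mem_inter] at hb ⊢
  exact ⟨h1.2 s t a b hb.1 ha hab, h2.2 s t a b hb.2 ha hab⟩

lemma goodS_compressed_inter {k n r : ℕ} {A : Finset (Fin (n + 1) → Fin (k + 1))}
    (hA : IsCompressed A) : goodS k n r (A ∩ Bexact k (n + 1) r) := by
  refine ⟨fun x hx => (Finset.mem_inter.mp hx).2, ?_⟩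
  intro s t a b hb ha hab
  rw [Finset.mem_inter] at hb ⊢
  refine ⟨?_, ha⟩
  have hsl := compressed_iff.mp hA s t
  have hbm : b ∈ slc s t A := mem_slc.mpr hb.1
  have := hsl b hbm a hab
  exact mem_slc.mp this

lemma goodS_lvlP (k n r c : ℕ) : goodS k n r (lvlP k (n + 1) r c) := by
  refine ⟨Finset.filter_subset _ _, ?_⟩
  intro s t a b hb ha hab
  rw [lvlP, Finset.mem_filter] at hb ⊢
  refine ⟨ha, le_trans (Finset.card_le_card ?_) hb.2⟩
  intro z hz
  rw [Finset.mem_filter] at hz ⊢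
  exact ⟨hz.1, ple_trans hz.2 (ple_insertNth.mpr hab)⟩

lemma rank_lt {k N : ℕ} {Q : Finset (Fin N → Fin (k + 1))} {x x' : Fin N → Fin (k + 1)}
    (hx' : x' ∈ Q) (h : Gv x < Gv x') :
    (Q.filter fun y => ple y x).card < (Q.filter fun y => ple y x').card := by
  apply Finset.card_lt_card
  rw [Finset.ssubset_iff_of_subset]
  · refine ⟨x', Finset.mem_filter.mpr ⟨hx', ple_refl x'⟩, ?_⟩
    rw [Finset.mem_filter]
    rintro ⟨-, hc⟩
    have := ple_iff.mp hc
    omega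
  · intro z hz
    rw [Finset.mem_filter] at hz ⊢
    exact ⟨hz.1, ple_trans hz.2 (ple_iff.mpr (le_of_lt h))⟩

lemma lvlP_zero (k N r : ℕ) : lvlP k N r 0 = ∅ := by
  ext x
  simp only [lvlP, Finset.mem_filter, Finset.notMem_empty, iff_false, not_and]
  intro hx
  have : x ∈ (Bexact k N r).filter fun y => ple y x := Finset.mem_filter.mpr ⟨hx, ple_refl x⟩
  have := Finset.card_pos.mpr ⟨x, this⟩
  omega

lemma lvlP_diff_card (k N r c : ℕ) : ((lvlP k N r (c + 1)) \ (lvlP k N r c)).card ≤ 1 := by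
  rw [Finset.card_le_one]
  intro a ha b hb
  rw [Finset.mem_sdiff, lvlP, Finset.mem_filter] at ha hb
  have ha2 : ¬ ((Bexact k N r).filter fun y => ple y a).card ≤ c := by
    intro hc
    exact ha.2 (Finset.mem_filter.mpr ⟨ha.1.1, hc⟩)
  have hb2 : ¬ ((Bexact k N r).filter fun y => ple y b).card ≤ c := by
    intro hc
    exact hb.2 (Finset.mem_filter.mpr ⟨hb.1.1, hc⟩)
  by_contra hne
  rcases lt_trichotomy (Gv a) (Gv b) with h | h | h
  · have := rank_lt hb.1.1 h
    have := hb.1.2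
    omega
  · exact hne (Gv_inj h)
  · have := rank_lt ha.1.1 h
    have := ha.1.2
    omega

lemma lvlP_top (k N r : ℕ) : Bexact k N r ⊆ lvlP k N r ((Bexact k N r).card) := by
  intro x hx
  rw [lvlP, Finset.mem_filter]
  exact ⟨hx, Finset.card_le_card (Finset.filter_subset _ _)⟩

lemma nat_ivt (f : ℕ → ℕ) (h0 : f 0 = 0) (hstep : ∀ ℓ, f (ℓ + 1) ≤ f ℓ + 1) (L m : ℕ)
    (hm : m ≤ f L) : ∃ ℓ, f ℓ = m := by
  induction L with
  | zero => exact ⟨0, by omega⟩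
  | succ L ih =>
    by_cases h : m ≤ f L
    · exact ih h
    · exact ⟨L + 1, by have := hstep L; omega⟩

lemma exists_S {k n r : ℕ} {T : Finset (Fin (n + 1) → Fin (k + 1))} (hT : goodS k n r T)
    (m : ℕ) (hm : m ≤ T.card) :
    ∃ S, goodS k n r S ∧ S.card = m ∧ S ⊆ T := by
  have hstep : ∀ ℓ, (T ∩ lvlP k (n + 1) r (ℓ + 1)).card ≤ (T ∩ lvlP k (n + 1) r ℓ).card + 1 := by
    intro ℓ
    have hsub : T ∩ lvlP k (n + 1) r (ℓ + 1) ⊆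
        (T ∩ lvlP k (n + 1) r ℓ) ∪ (lvlP k (n + 1) r (ℓ + 1) \ lvlP k (n + 1) r ℓ) := by
      intro a ha
      rw [Finset.mem_inter] at ha
      by_cases h : a ∈ lvlP k (n + 1) r ℓ
      · exact Finset.mem_union_left _ (Finset.mem_inter.mpr ⟨ha.1, h⟩)
      · exact Finset.mem_union_right _ (Finset.mem_sdiff.mpr ⟨ha.2, h⟩)
    calc (T ∩ lvlP k (n + 1) r (ℓ + 1)).card
        ≤ ((T ∩ lvlP k (n + 1) r ℓ) ∪ (lvlP k (n + 1) r (ℓ + 1) \ lvlP k (n + 1) r ℓ)).card :=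
          Finset.card_le_card hsub
      _ ≤ (T ∩ lvlP k (n + 1) r ℓ).card + (lvlP k (n + 1) r (ℓ + 1) \ lvlP k (n + 1) r ℓ).card :=
          Finset.card_union_le _ _
      _ ≤ (T ∩ lvlP k (n + 1) r ℓ).card + 1 := by
          have := lvlP_diff_card k (n + 1) r ℓ
          omega
  have h0 : (T ∩ lvlP k (n + 1) r 0).card = 0 := by
    rw [lvlP_zero, Finset.inter_empty, Finset.card_empty]
  have htop : (T ∩ lvlP k (n + 1) r ((Bexact k (n + 1) r).card)).card = T.card := by
    congr 1
    rw [Finset.inter_eq_left]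
    exact fun x hx => lvlP_top k (n + 1) r (hT.1 hx)
  obtain ⟨ℓ, hℓ⟩ := nat_ivt (fun ℓ => (T ∩ lvlP k (n + 1) r ℓ).card) h0 hstep
    ((Bexact k (n + 1) r).card) m
    (by show m ≤ (T ∩ lvlP k (n + 1) r ((Bexact k (n + 1) r).card)).card; omega)
  exact ⟨T ∩ lvlP k (n + 1) r ℓ, goodS_inter hT (goodS_lvlP k n r ℓ), hℓ,
    Finset.inter_subset_left⟩

lemma compressed_of_goodS {k n r : ℕ} {S : Finset (Fin (n + 1) → Fin (k + 1))}
    (hS : goodS k n r S) : IsCompressed (Bge k (n + 1) (r + 1) ∪ S) := by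
  rw [compressed_iff]
  intro s t
  intro b hb a hab
  rw [mem_slc] at hb ⊢
  have hz := zeros_antitone hab
  have hza := zeros_insertNth s t a
  have hzb := zeros_insertNth s t b
  rcases Finset.mem_union.mp hb with hb1 | hb1
  · rw [mem_Bge] at hb1
    apply Finset.mem_union_left
    rw [mem_Bge]
    by_cases ht : (t : ℕ) = 0 <;> simp only [ht, if_true, if_false] at hza hzb <;> omega
  · have hbr : (rset (s.insertNth t b) 0).card = r := mem_Bexact.mp (hS.1 hb1)
    rcases eq_or_lt_of_le hz with hz1 | hz1
    · have har : s.insertNth t a ∈ Bexact k (n + 1) r := by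
        rw [mem_Bexact]
        omega
      exact Finset.mem_union_right _ (hS.2 s t a b hb1 har hab)
    · apply Finset.mem_union_left
      rw [mem_Bge]
      omega

lemma Bge_card_split (k N r : ℕ) :
    (Bge k N r).card = (Bexact k N r).card + (Bge k N (r + 1)).card := by
  have he : Bge k N r = Bexact k N r ∪ Bge k N (r + 1) := by
    ext x
    rw [mem_Bge, Finset.mem_union, mem_Bexact, mem_Bge]
    omega
  have hd : Disjoint (Bexact k N r) (Bge k N (r + 1)) := by
    rw [Finset.disjoint_left]
    intro x hx hx2
    rw [mem_Bexact] at hx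
    rw [mem_Bge] at hx2
    omega
  rw [he, Finset.card_union_of_disjoint hd]

lemma Bge_anti (k N r : ℕ) : Bge k N (r + 1) ⊆ Bge k N r := by
  intro x hx
  rw [mem_Bge] at hx ⊢
  omega

lemma dShadow_sub_Bge {k N r : ℕ} {A : Finset (Fin N → Fin (k + 1))} (h : A ⊆ Bge k N r) :
    dShadow A ⊆ Bge k N (r + 1) := by
  intro z hz
  rw [mem_dShadow] at hz
  obtain ⟨x, hx, i, hi, rfl⟩ := hz
  have := mem_Bge.mp (h hx)
  rw [mem_Bge, zeros_update_zero hi]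
  omega


/-- **Claim 5, second part.** Let `k ≥ 2`, `n ≥ 2` and let `A' ⊆ [k]^n` be compressed
with `|B_{≥ r+1}| < |A'| ≤ |B_{≥ r}|` for some `0 ≤ r ≤ n`. Then there is a compressed
set `A` with `|A| = |A'|`, `B_{≥ r+1} ⊆ A ⊆ B_{≥ r}` and `|d(A')| ≥ |d(A)|`.
(Dimension `n ≥ 2` is rendered as `n + 1` with `n ≥ 1`, so `r ≤ n + 1`;
alphabet `[k]` with `k ≥ 2` as `Fin (k+1)` with `k ≥ 1`.) -/
theorem claim5_second (k n r : ℕ) (hk : 1 ≤ k) (hn : 1 ≤ n) (hr : r ≤ n + 1)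
    (A' : Finset (Fin (n + 1) → Fin (k + 1))) (hA' : IsCompressed A')
    (h1 : (Bge k (n + 1) (r + 1)).card < A'.card)
    (h2 : A'.card ≤ (Bge k (n + 1) r).card) :
    ∃ A : Finset (Fin (n + 1) → Fin (k + 1)),
      IsCompressed A ∧ A.card = A'.card ∧
      Bge k (n + 1) (r + 1) ⊆ A ∧ A ⊆ Bge k (n + 1) r ∧
      (dShadow A).card ≤ (dShadow A').card := by
  set m := A'.card - (Bge k (n + 1) (r + 1)).card with hm
  -- a point of A' with at most r zeros
  have hns : ¬ A' ⊆ Bge k (n + 1) (r + 1) := by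
    intro h
    have := Finset.card_le_card h
    omega
  obtain ⟨x₀, hx₀A, hx₀⟩ := Finset.not_subset.mp hns
  rw [mem_Bge] at hx₀
  have hx₀r : (rset x₀ 0).card ≤ r := by omega
  -- build T with the right properties in each case
  have key : ∃ T, goodS k n r T ∧ m ≤ T.card ∧
      (∀ z, z ∈ dShadow (T : Finset (Fin (n + 1) → Fin (k + 1))) → z ∈ dShadow A') := by
    by_cases hcase : ∀ x ∈ A', r ≤ (rset x 0).card
    · -- case (ii) : A' ⊆ Bge r
      refine ⟨A' ∩ Bexact k (n + 1) r, goodS_compressed_inter hA', ?_, ?_⟩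
      · -- m ≤ |A' ∩ B_r|
        have hsplit : A' = (A' ∩ Bge k (n + 1) (r + 1)) ∪ (A' ∩ Bexact k (n + 1) r) := by
          ext x
          rw [Finset.mem_union, Finset.mem_inter, Finset.mem_inter, mem_Bge, mem_Bexact]
          constructor
          · intro hx
            have hxr := hcase x hx
            by_cases hz : (rset x 0).card = r
            · exact Or.inr ⟨hx, hz⟩
            · exact Or.inl ⟨hx, by omega⟩
          · rintro (⟨hx, -⟩ | ⟨hx, -⟩) <;> exact hx
        have hd : Disjoint (A' ∩ Bge k (n + 1) (r + 1)) (A' ∩ Bexact k (n + 1) r) := by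
          rw [Finset.disjoint_left]
          intro x hx hx2
          rw [Finset.mem_inter, mem_Bge] at hx
          rw [Finset.mem_inter, mem_Bexact] at hx2
          omega
        have hcard : A'.card = (A' ∩ Bge k (n + 1) (r + 1)).card +
            (A' ∩ Bexact k (n + 1) r).card := by
          conv_lhs => rw [hsplit]
          exact Finset.card_union_of_disjoint hd
        have hle : (A' ∩ Bge k (n + 1) (r + 1)).card ≤ (Bge k (n + 1) (r + 1)).card :=
          Finset.card_le_card Finset.inter_subset_right
        omega
      · intro z hz
        exact dShadow_mono Finset.inter_subset_left hz
    · -- case (i) : some point with at most r-1 zeros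
      push_neg at hcase
      obtain ⟨x₁, hx₁A, hx₁⟩ := hcase
      refine ⟨Bexact k (n + 1) r, goodS_level k n r, ?_, ?_⟩
      · have := Bge_card_split k (n + 1) r
        omega
      · intro z hz
        have hzB : z ∈ Bge k (n + 1) (r + 1) :=
          dShadow_sub_Bge (by
            intro x hx
            rw [mem_Bexact] at hx
            rw [mem_Bge]
            omega) hz
        rw [mem_Bge] at hzB
        exact claimA hA' hx₁A (by omega)
  obtain ⟨T, hTgood, hTm, hTsh⟩ := key
  obtain ⟨S, hSgood, hScard, hST⟩ := exists_S hTgood m hTm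
  refine ⟨Bge k (n + 1) (r + 1) ∪ S, compressed_of_goodS hSgood, ?_, ?_, ?_, ?_⟩
  · -- cardinality
    have hd : Disjoint (Bge k (n + 1) (r + 1)) S := by
      rw [Finset.disjoint_left]
      intro x hx hx2
      rw [mem_Bge] at hx
      have := mem_Bexact.mp (hSgood.1 hx2)
      omega
    rw [Finset.card_union_of_disjoint hd, hScard]
    omega
  · exact Finset.subset_union_left
  · -- A ⊆ Bge r
    apply Finset.union_subset (Bge_anti k (n + 1) r)
    intro x hx
    have := mem_Bexact.mp (hSgood.1 hx)
    rw [mem_Bge]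
    omega
  · -- shadow comparison
    apply Finset.card_le_card
    intro z hz
    rw [mem_dShadow] at hz
    obtain ⟨x, hx, i, hi, rfl⟩ := hz
    rcases Finset.mem_union.mp hx with hx1 | hx1
    · -- x has ≥ r+1 zeros : use claim A with x₀
      rw [mem_Bge] at hx1
      apply claimA hA' hx₀A
      rw [zeros_update_zero hi]
      omega
    · -- x ∈ S ⊆ T : shadow of T is inside shadow of A'
      apply hTsh
      rw [mem_dShadow]
      exact ⟨x, hST hx1, i, hi, rfl⟩
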